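/- In a trie, a given L-root uniquely determines its run: if y = str(v_i, v_j) is a Lyndon word of length p occurring on a root-directed path of a trie, then there is at most one run with period p whose L-root occurrence is y; i.e., the maximal extension of the periodicity p in both directions (towards root and towards leaves along the path through v_i) from the occurrence of y is uniquely determined. -/

import Mathlib

/-- A trie with `n` edges: nodes are `0, …, n` with root `0`; every non-root node `v`
has a parent `parent v < v`, and the edge from `v` to its parent is labeled `label v`.
Edges from a node to its distinct children have distinct labels. -/
structure Trie (α : Type*) where
  n : ℕ
  parent : Fin (n + 1) → Fin (n + 1)
  label : Fin (n + 1) → α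
  root_fixed : parent 0 = 0
  parent_lt : ∀ v : Fin (n + 1), v ≠ 0 → parent v < v
  labels_distinct : ∀ u v : Fin (n + 1), u ≠ 0 → v ≠ 0 →
    parent u = parent v → label u = label v → u = v

/-- `strUp T k u` is the string of edge labels read along the path of length `k`
from `u` towards the root, i.e. `str(u, parentᵏ u)`. -/
def strUp {α : Type*} (T : Trie α) : ℕ → Fin (T.n + 1) → List α
  | 0, _ => []
  | k + 1, u => T.label u :: strUp T k (T.parent u)

/-- `p` is a period of `w`: `w[i] = w[i+p]` whenever both positions are valid. -/
def HasPeriod {α : Type*} (w : List α) (p : ℕ) : Prop :=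
  ∀ i, i + p < w.length → w[i]? = w[i + p]?

/-- `(v, k)` is a run of the trie `T` with (smallest) period `p`: the path of length
`k` from `v` towards the root is a genuine path (not passing beyond the root), `p` is
the smallest period of its label string, the exponent is at least `2`, and the
periodicity extends neither towards the root (the auxiliary parent `⊥` of the root
carries a distinct label) nor towards the leaves (to any child of `v`). -/
def TrieRun {α : Type*} (T : Trie α) (v : Fin (T.n + 1)) (k p : ℕ) : Prop :=
  0 < p ∧ 2 * p ≤ k ∧ (∀ m, m < k → (T.parent)^[m] v ≠ 0) ∧
  HasPeriod (strUp T k v) p ∧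
  (∀ q, 0 < q → q < p → ¬ HasPeriod (strUp T k v) q) ∧
  ((T.parent)^[k] v = 0 ∨ ¬ HasPeriod (strUp T (k + 1) v) p) ∧
  (∀ u : Fin (T.n + 1), u ≠ 0 → T.parent u = v → ¬ HasPeriod (strUp T (k + 1) u) p)

/-- A string (list) is a Lyndon word w.r.t. the lexicographic order:
it is strictly smaller than every nonempty proper suffix. -/
def IsLyndon {α : Type*} [LinearOrder α] (w : List α) : Prop :=
  w ≠ [] ∧ ∀ i, 0 < i → i < w.length → List.Lex (· < ·) w (w.drop i)

/-- In a trie, a given occurrence of an L-root determines its run uniquely: if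
`y = str(v_i, v_j)` is a Lyndon word of length `p` on a root-directed path, then
there is at most one run with period `p` containing this occurrence of `y`, since
the maximal extension of the periodicity `p` in both directions is uniquely
determined (towards the root parents are unique; towards the leaves next characters
are unique because sibling edges carry distinct labels). -/
lemma strUp_length {α : Type*} (T : Trie α) : ∀ (k : ℕ) (v : Fin (T.n + 1)),
    (strUp T k v).length = k
  | 0, _ => rfl
  | k + 1, v => by simp [strUp, strUp_length T k]

lemma strUp_get? {α : Type*} (T : Trie α) : ∀ (k i : ℕ) (v : Fin (T.n + 1)), i < k →
    (strUp T k v)[i]? = some (T.label ((T.parent)^[i] v))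
  | 0, i, v, h => by omega
  | k + 1, 0, v, h => rfl
  | k + 1, i + 1, v, h => by
      have := strUp_get? T k i (T.parent v) (by omega)
      rw [strUp, List.getElem?_cons_succ, this, Function.iterate_succ_apply]

lemma hasPeriod_strUp_iff {α : Type*} (T : Trie α) (k p : ℕ) (v : Fin (T.n + 1)) :
    HasPeriod (strUp T k v) p ↔
      ∀ i, i + p < k → T.label ((T.parent)^[i] v) = T.label ((T.parent)^[i + p] v) := by
  constructor
  · intro H i hi
    have h1 := H i (by rw [strUp_length]; exact hi)
    rw [strUp_get? T k i v (by omega), strUp_get? T k (i+p) v hi] at h1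
    exact Option.some_injective _ h1
  · intro H i hi
    rw [strUp_length] at hi
    rw [strUp_get? T k i v (by omega), strUp_get? T k (i+p) v hi, H i hi]

lemma congr_of_period {α : Type*} {p k : ℕ} (hp : 0 < p) (f : ℕ → α)
    (H : ∀ i, i + p < k → f i = f (i + p)) :
    ∀ (d i j : ℕ), j - i ≤ d → i ≤ j → (j - i) % p = 0 → j < k → f i = f j := by
  intro d
  induction d with
  | zero =>
    intro i j h1 h2 _ _
    have hij : i = j := by omega
    exact congrArg f hij
  | succ d ih =>
    intro i j h1 h2 h3 h4
    rcases Nat.eq_or_lt_of_le h2 with h | h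
    · rw [h]
    · have hdp : p ≤ j - i := by
        rcases Nat.lt_or_ge (j - i) p with hlt | hge
        · exfalso; rw [Nat.mod_eq_of_lt hlt] at h3; omega
        · exact hge
      have h5 : f i = f (i + p) := H i (by omega)
      rw [h5]
      apply ih (i + p) j (by omega) (by omega) _ h4
      have : j - i = (j - (i + p)) + p := by omega
      rw [this, Nat.add_mod_right] at h3
      exact h3

lemma resid_spec {p : ℕ} (hp : 0 < p) (d : ℕ) :
    (p - d % p) % p < p ∧ (d + (p - d % p) % p) % p = 0 := by
  refine ⟨Nat.mod_lt _ hp, ?_⟩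
  rcases Nat.eq_zero_or_pos (d % p) with h0 | h0
  · rw [h0, Nat.sub_zero, Nat.mod_self, Nat.add_zero, h0]
  · have h1 : d % p < p := Nat.mod_lt _ hp
    have h2 : p - d % p < p := by omega
    rw [Nat.mod_eq_of_lt h2]
    have h3 : d + (p - d % p) = p * (d / p) + p := by
      have := Nat.div_add_mod d p
      omega
    rw [h3]
    have : p * (d / p) + p = p * (d / p + 1) := by ring
    rw [this, Nat.mul_mod_right]

/-- In a run containing `vi` at depth `a` with `a + p ≤ k`, the labels at and below
`vi` are determined by the labels of the `p` nodes just above `vi`. -/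
lemma run_label_below {α : Type*} (T : Trie α) {u vi : Fin (T.n + 1)} {k a p : ℕ}
    (hp : 0 < p)
    (hper : ∀ i, i + p < k → T.label ((T.parent)^[i] u) = T.label ((T.parent)^[i + p] u))
    (ha : (T.parent)^[a] u = vi) (hak : a + p ≤ k) {i : ℕ} (hi : i ≤ a) :
    T.label ((T.parent)^[i] u) =
      T.label ((T.parent)^[(p - (a - i) % p) % p] vi) := by
  set r := (p - (a - i) % p) % p with hr
  obtain ⟨hr1, hr2⟩ := resid_spec hp (a - i)
  have key : T.label ((T.parent)^[i] u) = T.label ((T.parent)^[a + r] u) := by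
    apply congr_of_period hp (fun m => T.label ((T.parent)^[m] u)) hper (a + r)
      i (a + r) (by omega) (by omega) _ (by omega)
    have : a + r - i = (a - i) + r := by omega
    rw [this]; exact hr2
  rw [key]
  have : a + r = r + a := by omega
  rw [this, Function.iterate_add_apply, ha]

lemma descend {α : Type*} (T : Trie α) :
    ∀ (a : ℕ) (u u' : Fin (T.n + 1)),
    (∀ m, m < a → (T.parent)^[m] u ≠ 0) →
    (∀ m, m < a → (T.parent)^[m] u' ≠ 0) →
    (T.parent)^[a] u = (T.parent)^[a] u' →
    (∀ m, m < a → T.label ((T.parent)^[m] u) = T.label ((T.parent)^[m] u')) →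
    u = u'
  | 0, u, u', _, _, h, _ => h
  | a + 1, u, u', h1, h2, h3, h4 => by
    have hpar : T.parent u = T.parent u' := by
      apply descend T a (T.parent u) (T.parent u')
      · intro m hm
        rw [← Function.iterate_succ_apply]
        exact h1 (m + 1) (by omega)
      · intro m hm
        rw [← Function.iterate_succ_apply]
        exact h2 (m + 1) (by omega)
      · rw [← Function.iterate_succ_apply, ← Function.iterate_succ_apply]
        exact h3
      · intro m hm
        rw [← Function.iterate_succ_apply, ← Function.iterate_succ_apply]
        exact h4 (m + 1) (by omega)
    exact T.labels_distinct u u' (h1 0 (by omega)) (h2 0 (by omega)) hpar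
      (by simpa using h4 0 (by omega))

/-- Upward maximality: the length of the periodic stretch above `vi` in run 1 is
at least that in run 2. -/
lemma top_le {α : Type*} (T : Trie α) {vi u₁ u₂ : Fin (T.n + 1)} {p k₁ k₂ a₁ a₂ : ℕ}
    (hp : 0 < p)
    (hper₁ : ∀ i, i + p < k₁ → T.label ((T.parent)^[i] u₁) = T.label ((T.parent)^[i + p] u₁))
    (htop₁ : (T.parent)^[k₁] u₁ = 0 ∨ ¬ HasPeriod (strUp T (k₁ + 1) u₁) p)
    (hpath₂ : ∀ m, m < k₂ → (T.parent)^[m] u₂ ≠ 0)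
    (hper₂ : ∀ i, i + p < k₂ → T.label ((T.parent)^[i] u₂) = T.label ((T.parent)^[i + p] u₂))
    (ha1 : (T.parent)^[a₁] u₁ = vi) (hb1 : a₁ + p ≤ k₁)
    (ha2 : (T.parent)^[a₂] u₂ = vi) (hb2 : a₂ + p ≤ k₂) :
    k₂ - a₂ ≤ k₁ - a₁ := by
  by_contra hlt
  push_neg at hlt
  have e1 : ∀ m, (T.parent)^[m + a₁] u₁ = (T.parent)^[m] vi := fun m => by
    rw [Function.iterate_add_apply, ha1]
  have e2 : ∀ m, (T.parent)^[m + a₂] u₂ = (T.parent)^[m] vi := fun m => by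
    rw [Function.iterate_add_apply, ha2]
  rcases htop₁ with h0 | hnp
  · have hv : (T.parent)^[k₁ - a₁] vi = 0 := by
      have h := e1 (k₁ - a₁)
      rw [show k₁ - a₁ + a₁ = k₁ from by omega] at h
      rw [← h, h0]
    exact hpath₂ ((k₁ - a₁) + a₂) (by omega) ((e2 _).trans hv)
  · apply hnp
    rw [hasPeriod_strUp_iff]
    intro i hi
    rcases Nat.lt_or_ge (i + p) k₁ with h | h
    · exact hper₁ i h
    · have hia : a₁ ≤ i := by omega
      have g1 : (T.parent)^[i] u₁ = (T.parent)^[i - a₁] vi := by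
        have h' := e1 (i - a₁)
        rw [show i - a₁ + a₁ = i from by omega] at h'
        exact h'
      have g2 : (T.parent)^[i + p] u₁ = (T.parent)^[i + p - a₁] vi := by
        have h' := e1 (i + p - a₁)
        rw [show i + p - a₁ + a₁ = i + p from by omega] at h'
        exact h'
      rw [g1, g2]
      have h2 := hper₂ ((i - a₁) + a₂) (by omega)
      have q1 : (T.parent)^[(i - a₁) + a₂] u₂ = (T.parent)^[i - a₁] vi := e2 _
      have q2 : (T.parent)^[(i - a₁) + a₂ + p] u₂ = (T.parent)^[i + p - a₁] vi := by
        have h' := e2 (i + p - a₁)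
        rw [show i + p - a₁ + a₂ = (i - a₁) + a₂ + p from by omega] at h'
        exact h'
      rw [q1, q2] at h2
      exact h2

/-- Downward determinism: the path below `vi` is uniquely determined. -/
lemma down_eq {α : Type*} (T : Trie α) {vi u₁ u₂ : Fin (T.n + 1)} {p k₁ k₂ a₁ a₂ : ℕ}
    (hp : 0 < p)
    (hpath₁ : ∀ m, m < k₁ → (T.parent)^[m] u₁ ≠ 0)
    (hper₁ : ∀ i, i + p < k₁ → T.label ((T.parent)^[i] u₁) = T.label ((T.parent)^[i + p] u₁))
    (ha1 : (T.parent)^[a₁] u₁ = vi) (hb1 : a₁ + p ≤ k₁)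
    (hpath₂ : ∀ m, m < k₂ → (T.parent)^[m] u₂ ≠ 0)
    (hper₂ : ∀ i, i + p < k₂ → T.label ((T.parent)^[i] u₂) = T.label ((T.parent)^[i + p] u₂))
    (ha2 : (T.parent)^[a₂] u₂ = vi) (hb2 : a₂ + p ≤ k₂)
    (hle : a₁ ≤ a₂) :
    u₁ = (T.parent)^[a₂ - a₁] u₂ := by
  apply descend T a₁
  · intro m hm
    exact hpath₁ m (by omega)
  · intro m hm
    rw [← Function.iterate_add_apply]
    exact hpath₂ (m + (a₂ - a₁)) (by omega)
  · rw [← Function.iterate_add_apply, show a₁ + (a₂ - a₁) = a₂ from by omega, ha1, ha2]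
  · intro m hm
    have hA := run_label_below T hp hper₁ ha1 hb1 (le_of_lt hm)
    have e : (T.parent)^[m] ((T.parent)^[a₂ - a₁] u₂) = (T.parent)^[m + (a₂ - a₁)] u₂ :=
      (Function.iterate_add_apply _ m _ u₂).symm
    have hB := run_label_below T hp hper₂ ha2 hb2 (i := m + (a₂ - a₁)) (by omega)
    rw [hA, e, hB, show a₂ - (m + (a₂ - a₁)) = a₁ - m from by omega]

/-- Downward maximality: run 2 cannot reach strictly deeper below `vi` than run 1. -/
lemma a_le {α : Type*} (T : Trie α) {vi u₁ u₂ : Fin (T.n + 1)} {p k₁ k₂ a₁ a₂ : ℕ}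
    (hp : 0 < p)
    (hpath₁ : ∀ m, m < k₁ → (T.parent)^[m] u₁ ≠ 0)
    (hper₁ : ∀ i, i + p < k₁ → T.label ((T.parent)^[i] u₁) = T.label ((T.parent)^[i + p] u₁))
    (ha1 : (T.parent)^[a₁] u₁ = vi) (hb1 : a₁ + p ≤ k₁)
    (hpath₂ : ∀ m, m < k₂ → (T.parent)^[m] u₂ ≠ 0)
    (hper₂ : ∀ i, i + p < k₂ → T.label ((T.parent)^[i] u₂) = T.label ((T.parent)^[i + p] u₂))
    (ha2 : (T.parent)^[a₂] u₂ = vi) (hb2 : a₂ + p ≤ k₂)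
    (hbot₁ : ∀ u : Fin (T.n + 1), u ≠ 0 → T.parent u = u₁ → ¬ HasPeriod (strUp T (k₁ + 1) u) p)
    (hk : k₁ + a₂ = k₂ + a₁) :
    a₂ ≤ a₁ := by
  by_contra hlt
  push_neg at hlt
  have hu : u₁ = (T.parent)^[a₂ - a₁] u₂ :=
    down_eq T hp hpath₁ hper₁ ha1 hb1 hpath₂ hper₂ ha2 hb2 (le_of_lt hlt)
  set c := (T.parent)^[a₂ - a₁ - 1] u₂ with hc
  have hc0 : c ≠ 0 := hpath₂ _ (by omega)
  have hcp : T.parent c = u₁ := by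
    rw [hu, hc]
    have h' := Function.iterate_succ_apply' T.parent (a₂ - a₁ - 1) u₂
    rw [show (a₂ - a₁ - 1).succ = a₂ - a₁ from by omega] at h'
    exact h'.symm
  apply hbot₁ c hc0 hcp
  rw [hasPeriod_strUp_iff]
  intro i hi
  have e : ∀ m, (T.parent)^[m] c = (T.parent)^[m + (a₂ - a₁ - 1)] u₂ := fun m =>
    (Function.iterate_add_apply _ m _ u₂).symm
  rw [e i, e (i + p), show i + p + (a₂ - a₁ - 1) = i + (a₂ - a₁ - 1) + p from by omega]
  exact hper₂ (i + (a₂ - a₁ - 1)) (by omega)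

theorem stmt19 {α : Type*} [LinearOrder α] (T : Trie α) (vi : Fin (T.n + 1)) (p : ℕ)
    (hp : 0 < p) (hpath : ∀ m, m < p → (T.parent)^[m] vi ≠ 0)
    (hLyn : IsLyndon (strUp T p vi))
    (u₁ u₂ : Fin (T.n + 1)) (k₁ k₂ a₁ a₂ : ℕ)
    (hr1 : TrieRun T u₁ k₁ p) (hr2 : TrieRun T u₂ k₂ p)
    (ha1 : (T.parent)^[a₁] u₁ = vi) (hb1 : a₁ + p ≤ k₁)
    (ha2 : (T.parent)^[a₂] u₂ = vi) (hb2 : a₂ + p ≤ k₂) :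
    u₁ = u₂ ∧ k₁ = k₂ := by
  obtain ⟨-, -, hpath₁, hperiod₁, -, htop₁, hbot₁⟩ := hr1
  obtain ⟨-, -, hpath₂, hperiod₂, -, htop₂, hbot₂⟩ := hr2
  have hP₁ := (hasPeriod_strUp_iff T k₁ p u₁).mp hperiod₁
  have hP₂ := (hasPeriod_strUp_iff T k₂ p u₂).mp hperiod₂
  have ht1 := top_le T hp hP₁ htop₁ hpath₂ hP₂ ha1 hb1 ha2 hb2
  have ht2 := top_le T hp hP₂ htop₂ hpath₁ hP₁ ha2 hb2 ha1 hb1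
  have hk : k₁ + a₂ = k₂ + a₁ := by omega
  have hA := a_le T hp hpath₁ hP₁ ha1 hb1 hpath₂ hP₂ ha2 hb2 hbot₁ hk
  have hB := a_le T hp hpath₂ hP₂ ha2 hb2 hpath₁ hP₁ ha1 hb1 hbot₂ (by omega)
  have haa : a₁ = a₂ := le_antisymm hB hA
  have hu : u₁ = (T.parent)^[a₂ - a₁] u₂ :=
    down_eq T hp hpath₁ hP₁ ha1 hb1 hpath₂ hP₂ ha2 hb2 (le_of_eq haa)
  refine ⟨?_, by omega⟩
  rw [hu, show a₂ - a₁ = 0 from by omega]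
  rfl
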